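/- arXiv:1402.4094 — 4 statements merged into one kernel-verified Lean document; each statement's English description precedes it below -/
import Mathlib

section
/- Let H be a complex Hilbert space and let D be a closed, densely defined, symmetric unbounded operator on H. Suppose there exist bounded linear operators Q and R on H such that for every x ∈ H one has Q x ∈ dom D and D(Q x) = x − R x, and such that the ranges of the (Hilbert-space) adjoints Q* and R* are contained in dom D. Then D is self-adjoint, i.e. D equals its adjoint D* with equal domains. -/
/-- Abstract parametrix argument for self-adjointness: if `D` is a closed, densely
defined, symmetric unbounded operator on a complex Hilbert space and there are
bounded operators `Q`, `R` with `D (Q x) = x - R x` for all `x`, and the ranges of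
the adjoints `Q*` and `R*` are contained in the domain of `D`, then `D` is
self-adjoint, i.e. `D† = D`. -/
theorem selfAdjoint_of_parametrix
    {H : Type*} [NormedAddCommGroup H] [InnerProductSpace ℂ H] [CompleteSpace H]
    (D : H →ₗ.[ℂ] H)
    (hdense : Dense (D.domain : Set H))
    (hclosed : D.IsClosed)
    (hsymm : ∀ x y : D.domain,
      @inner ℂ _ _ (D x) (y : H) = @inner ℂ _ _ ((x : H)) (D y))
    (Q R : H →L[ℂ] H)
    (hQ : ∀ x : H, ∃ hx : Q x ∈ D.domain, D ⟨Q x, hx⟩ = x - R x)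
    (hQadj : ∀ x : H, (ContinuousLinearMap.adjoint Q) x ∈ D.domain)
    (hRadj : ∀ x : H, (ContinuousLinearMap.adjoint R) x ∈ D.domain) :
    D.adjoint = D := by
  have hfa : D.IsFormalAdjoint D := fun x y => hsymm x y
  have hle : D ≤ D.adjoint := hfa.le_adjoint hdense
  have hdom : D.adjoint.domain ≤ D.domain := by
    intro y hy
    set z := D.adjoint ⟨y, hy⟩ with hz
    have key : y = (ContinuousLinearMap.adjoint R) y
        + (ContinuousLinearMap.adjoint Q) z := by
      apply ext_inner_left ℂ
      intro x
      rw [inner_add_right, ContinuousLinearMap.adjoint_inner_right,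
        ContinuousLinearMap.adjoint_inner_right]
      obtain ⟨hx, hDx⟩ := hQ x
      have hadj := (D.adjoint_isFormalAdjoint hdense) ⟨y, hy⟩ ⟨Q x, hx⟩
      -- hadj : ⟪z, Q x⟫ = ⟪y, D ⟨Q x, hx⟩⟫
      have h1 : (inner ℂ (Q x) z : ℂ) = inner ℂ (x - R x) y := by
        rw [← inner_conj_symm, hadj, hDx, inner_conj_symm]
      rw [h1, inner_sub_left]
      ring
    rw [key]
    exact D.domain.add_mem (hRadj y) (hQadj z)
  exact (LinearPMap.eq_of_le_of_domain_eq hle (le_antisymm hle.1 hdom)).symm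
end

section
/- Let H be a complex Hilbert space and let D be a closed, densely defined unbounded operator on H. Let V ⊆ dom D be a core for D, i.e. the closure of the restriction of D to V equals D (equivalently: for every x ∈ dom D there is a sequence v_n ∈ V with v_n → x and D v_n → D x). Let Q and T be bounded linear operators on H whose ranges are contained in dom D and such that Q(D v) = v − T v for every v ∈ V. Then dom D = range(Q) + range(T), i.e. every element of dom D is a sum of an element of the range of Q and an element of the range of T, and conversely every such sum lies in dom D. -/
open Filter Topology

/-- Abstract form of step (ii) of the parametrix argument: if `V` is a core for the
closed, densely defined operator `D`, the bounded operators `Q`, `T` have ranges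
contained in `dom D`, and `Q (D v) = v - T v` for all `v ∈ V`, then
`dom D = range Q + range T`. -/
theorem domain_eq_range_add_range_of_parametrix
    {H : Type*} [NormedAddCommGroup H] [InnerProductSpace ℂ H] [CompleteSpace H]
    (D : H →ₗ.[ℂ] H)
    (hdense : Dense (D.domain : Set H))
    (hclosed : D.IsClosed)
    (V : Submodule ℂ H) (hV : V ≤ D.domain)
    (hcore : ∀ x : D.domain, ∃ v : ℕ → V,
      Tendsto (fun n => ((v n : H))) atTop (𝓝 (x : H)) ∧
      Tendsto (fun n => D ⟨(v n : H), hV (v n).2⟩) atTop (𝓝 (D x)))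
    (Q T : H →L[ℂ] H)
    (hQ : ∀ x : H, Q x ∈ D.domain) (hT : ∀ x : H, T x ∈ D.domain)
    (hpar : ∀ v (hv : v ∈ V), Q (D ⟨v, hV hv⟩) = v - T v) :
    (D.domain : Set H) = {x : H | ∃ a b : H, x = Q a + T b} := by
  ext x
  constructor
  · intro hx
    obtain ⟨v, hv1, hv2⟩ := hcore ⟨x, hx⟩
    refine ⟨D ⟨x, hx⟩, x, ?_⟩
    have h1 : Tendsto (fun n => Q (D ⟨(v n : H), hV (v n).2⟩) + T (v n : H)) atTop
        (𝓝 (Q (D ⟨x, hx⟩) + T x)) :=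
      ((Q.continuous.tendsto _).comp hv2).add ((T.continuous.tendsto _).comp hv1)
    have h2 : (fun n => Q (D ⟨(v n : H), hV (v n).2⟩) + T (v n : H)) = fun n => (v n : H) := by
      funext n
      rw [hpar _ (v n).2]
      abel
    rw [h2] at h1
    exact tendsto_nhds_unique hv1 h1
  · rintro ⟨a, b, rfl⟩
    exact D.domain.add_mem (hQ a) (hT b)
end

section
/- Let g : ℝ → ℝ be the function g(x) = (1 + x²)^(−1/2). Then g belongs to L²(ℝ) (with respect to Lebesgue measure), and for every integer k ≥ 1 and every integer l with 0 ≤ l < k, the function x ↦ x^l · g^{(k)}(x) (where g^{(k)} denotes the k-th derivative of g) belongs to L²(ℝ). -/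
open MeasureTheory Polynomial

private lemma one_add_sq_pos (x : ℝ) : (0:ℝ) < 1 + x ^ 2 := by positivity

/-- structure of the k-th derivative -/
private lemma iter_struct (k : ℕ) :
    ∃ p : Polynomial ℝ, p.natDegree ≤ k ∧ ∀ x : ℝ,
      iteratedDeriv k (fun y : ℝ => (1 + y ^ 2) ^ (-(1 / 2 : ℝ))) x
        = p.eval x * (1 + x ^ 2) ^ (-(1 / 2 : ℝ) - k) := by
  induction k with
  | zero =>
    exact ⟨1, by simp, fun x => by simp⟩
  | succ k ih =>
    obtain ⟨p, hdeg, hp⟩ := ih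
    set a : ℝ := -(1 / 2 : ℝ) - k with ha
    refine ⟨derivative p * (1 + X ^ 2) + Polynomial.C (2 * a) * (X * p), ?_, ?_⟩
    · refine (natDegree_add_le _ _).trans (max_le ?_ ?_)
      · by_cases hd0 : derivative p = 0
        · simp [hd0]
        · have hp1 : 1 ≤ p.natDegree := by
            by_contra h
            have h0 : p.natDegree = 0 := by omega
            have := Polynomial.eq_C_of_natDegree_eq_zero h0
            rw [this] at hd0
            simp at hd0
          refine (natDegree_mul_le).trans ?_
          have h2 : (1 + X ^ 2 : Polynomial ℝ).natDegree ≤ 2 := by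
            refine (natDegree_add_le _ _).trans (max_le (by simp) (by simp [natDegree_X_pow]))
          have hd : (derivative p).natDegree ≤ k - 1 := natDegree_derivative_le p |>.trans
            (Nat.sub_le_sub_right hdeg 1)
          omega
      · refine (natDegree_mul_le).trans ?_
        have : (X * p : Polynomial ℝ).natDegree ≤ 1 + k := by
          refine (natDegree_mul_le).trans ?_
          simp only [natDegree_X]
          omega
        simp only [natDegree_C]
        omega
    · intro x
      rw [iteratedDeriv_succ]
      have hD : HasDerivAt (fun x : ℝ => p.eval x * (1 + x ^ 2) ^ a)
          (eval x (derivative p) * (1 + x ^ 2) ^ a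
            + p.eval x * (2 * x * a * (1 + x ^ 2) ^ (a - 1))) x := by
        have h1 : HasDerivAt (fun x : ℝ => 1 + x ^ 2) (2 * x) x := by
          simpa using ((hasDerivAt_pow 2 x).const_add 1)
        have h2 : HasDerivAt (fun x : ℝ => (1 + x ^ 2) ^ a)
            (2 * x * a * (1 + x ^ 2) ^ (a - 1)) x :=
          h1.rpow_const (Or.inl (one_add_sq_pos x).ne')
        exact (p.hasDerivAt x).mul h2
      have hcongr : deriv (iteratedDeriv k (fun y : ℝ => (1 + y ^ 2) ^ (-(1 / 2 : ℝ)))) x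
          = deriv (fun x : ℝ => p.eval x * (1 + x ^ 2) ^ a) x := by
        apply Filter.EventuallyEq.deriv_eq
        exact Filter.Eventually.of_forall hp
      rw [hcongr, hD.deriv]
      have hsplit : (1 + x ^ 2 : ℝ) ^ a = (1 + x ^ 2) * (1 + x ^ 2) ^ (a - 1) := by
        have haa : a = (a - 1) + 1 := by ring
        conv_lhs => rw [haa]
        rw [Real.rpow_add_one (one_add_sq_pos x).ne', mul_comm]
      have hexp : -(1 / 2 : ℝ) - (k + 1 : ℕ) = a - 1 := by
        push_cast [ha]; ring
      rw [hexp, hsplit]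
      simp only [eval_add, eval_mul, eval_C, eval_one, eval_X, eval_pow, eval_add, eval_one]
      ring

/-- polynomial growth bound -/
private lemma poly_bound (p : Polynomial ℝ) (x : ℝ) :
    |p.eval x| ≤ (∑ i ∈ Finset.range (p.natDegree + 1), |p.coeff i|)
      * (1 + x ^ 2) ^ ((p.natDegree : ℝ) / 2) := by
  rw [eval_eq_sum_range, Finset.sum_mul]
  refine (Finset.abs_sum_le_sum_abs _ _).trans (Finset.sum_le_sum fun i hi => ?_)
  rw [abs_mul, abs_pow]
  refine mul_le_mul_of_nonneg_left ?_ (abs_nonneg _)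
  have hx : |x| ≤ (1 + x ^ 2) ^ ((1 : ℝ) / 2) := by
    rw [← Real.sqrt_eq_rpow, ← Real.sqrt_sq_eq_abs]
    exact Real.sqrt_le_sqrt (by nlinarith)
  calc |x| ^ i ≤ ((1 + x ^ 2) ^ ((1 : ℝ) / 2)) ^ i :=
        pow_le_pow_left₀ (abs_nonneg x) hx i
    _ = (1 + x ^ 2) ^ ((i : ℝ) / 2) := by
        rw [← Real.rpow_natCast ((1 + x ^ 2) ^ ((1:ℝ)/2)) i,
          ← Real.rpow_mul (one_add_sq_pos x).le]
        ring_nf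
    _ ≤ (1 + x ^ 2) ^ ((p.natDegree : ℝ) / 2) := by
        apply Real.rpow_le_rpow_of_exponent_le (by nlinarith)
        have : i ≤ p.natDegree := by
          have := Finset.mem_range.mp hi; omega
        exact div_le_div_of_nonneg_right (by exact_mod_cast this) (by norm_num)

/-- Part of Lemma 3.7 of the paper: `g(x) = (1 + x²)^(-1/2)` is in `L²(ℝ)`, and
for all `k ≥ 1` and `0 ≤ l < k` the function `x ↦ xˡ · g⁽ᵏ⁾(x)` is in `L²(ℝ)`. -/
theorem memL2_weighted_iteratedDeriv_one_add_sq_rpow_neg_half :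
    MemLp (fun x : ℝ => (1 + x ^ 2) ^ (-(1 / 2 : ℝ))) 2 volume ∧
    ∀ k : ℕ, 1 ≤ k → ∀ l : ℕ, l < k →
      MemLp
        (fun x : ℝ =>
          x ^ l * iteratedDeriv k (fun y : ℝ => (1 + y ^ 2) ^ (-(1 / 2 : ℝ))) x)
        2 volume := by
  have hgcont : Continuous (fun x : ℝ => (1 + x ^ 2) ^ (-(1 / 2 : ℝ))) := by
    apply Continuous.rpow_const (by continuity)
    exact fun x => Or.inl (one_add_sq_pos x).ne'
  have hg : MemLp (fun x : ℝ => (1 + x ^ 2) ^ (-(1 / 2 : ℝ))) 2 volume := by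
    rw [memLp_two_iff_integrable_sq hgcont.aestronglyMeasurable]
    have : (fun x : ℝ => ((1 + x ^ 2) ^ (-(1 / 2 : ℝ))) ^ 2)
        = fun x : ℝ => (1 + x ^ 2)⁻¹ := by
      funext x
      rw [← Real.rpow_natCast ((1 + x ^ 2) ^ (-(1/2:ℝ))) 2,
        ← Real.rpow_mul (one_add_sq_pos x).le]
      norm_num [Real.rpow_neg_one]
    rw [this]
    exact integrable_inv_one_add_sq
  refine ⟨hg, fun k hk l hl => ?_⟩
  obtain ⟨p, hdeg, hp⟩ := iter_struct k
  set S : ℝ := ∑ i ∈ Finset.range (p.natDegree + 1), |p.coeff i| with hS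
  have hS0 : 0 ≤ S := Finset.sum_nonneg fun i _ => abs_nonneg _
  refine MemLp.of_le (hg.const_mul S) ?_ ?_
  · -- measurability via the explicit formula
    have : (fun x : ℝ =>
        x ^ l * iteratedDeriv k (fun y : ℝ => (1 + y ^ 2) ^ (-(1 / 2 : ℝ))) x)
        = fun x : ℝ => x ^ l * (p.eval x * (1 + x ^ 2) ^ (-(1 / 2 : ℝ) - k)) := by
      funext x; rw [hp x]
    rw [this]
    apply Continuous.aestronglyMeasurable
    apply (continuous_pow l).mul
    apply (p.continuous_aeval).mul
    apply Continuous.rpow_const (by continuity)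
    exact fun x => Or.inl (one_add_sq_pos x).ne'
  · refine Filter.Eventually.of_forall fun x => ?_
    have hb := one_add_sq_pos x
    have hb1 : (1:ℝ) ≤ 1 + x ^ 2 := by nlinarith
    rw [hp x, Real.norm_eq_abs, Real.norm_eq_abs, abs_mul, abs_mul, abs_pow]
    have h1 : |x| ^ l ≤ (1 + x ^ 2) ^ ((l : ℝ) / 2) := by
      have hx : |x| ≤ (1 + x ^ 2) ^ ((1 : ℝ) / 2) := by
        rw [← Real.sqrt_eq_rpow, ← Real.sqrt_sq_eq_abs]
        exact Real.sqrt_le_sqrt (by nlinarith)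
      calc |x| ^ l ≤ ((1 + x ^ 2) ^ ((1 : ℝ) / 2)) ^ l :=
            pow_le_pow_left₀ (abs_nonneg x) hx l
        _ = (1 + x ^ 2) ^ ((l : ℝ) / 2) := by
            rw [← Real.rpow_natCast ((1 + x ^ 2) ^ ((1:ℝ)/2)) l, ← Real.rpow_mul hb.le]
            ring_nf
    have h2 := poly_bound p x
    have h3 : |(1 + x ^ 2 : ℝ) ^ (-(1 / 2 : ℝ) - k)| = (1 + x ^ 2) ^ (-(1 / 2 : ℝ) - k) :=
      abs_of_nonneg (Real.rpow_nonneg hb.le _)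
    rw [h3]
    calc |x| ^ l * (|p.eval x| * (1 + x ^ 2) ^ (-(1 / 2 : ℝ) - k))
        ≤ (1 + x ^ 2) ^ ((l : ℝ) / 2)
            * ((S * (1 + x ^ 2) ^ ((p.natDegree : ℝ) / 2)) * (1 + x ^ 2) ^ (-(1 / 2 : ℝ) - k)) := by
          apply mul_le_mul h1 (mul_le_mul_of_nonneg_right h2 (Real.rpow_nonneg hb.le _))
            (by positivity) (Real.rpow_nonneg hb.le _)
      _ = S * (1 + x ^ 2) ^ ((l : ℝ) / 2 + (p.natDegree : ℝ) / 2 + (-(1 / 2 : ℝ) - k)) := by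
          rw [Real.rpow_add hb, Real.rpow_add hb]; ring
      _ ≤ S * (1 + x ^ 2) ^ (-(1 / 2 : ℝ)) := by
          apply mul_le_mul_of_nonneg_left _ hS0
          apply Real.rpow_le_rpow_of_exponent_le hb1
          have hlk : (l : ℝ) ≤ (k : ℝ) - 1 := by
            have : l + 1 ≤ k := hl
            have := (Nat.cast_le (α := ℝ)).mpr this
            push_cast at this ⊢; linarith
          have hdk : (p.natDegree : ℝ) ≤ k := by exact_mod_cast hdeg
          linarith
      _ ≤ |S * (1 + x ^ 2) ^ (-(1 / 2 : ℝ))| := le_abs_self _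
end

section
/- Let g : ℝ → ℝ be the function g(x) = x · (1 + x²)^(−1/2). For every ε > 0 there exists an integrable function h : ℝ → ℂ with compact support such that the inverse Fourier transform u := 𝓕⁻¹ h (a bounded continuous function on ℝ) satisfies |x| · |u(x) − (1 + x²)^(−1/2)| ≤ ε for all x ∈ ℝ; equivalently, |x · u(x) − g(x)| ≤ ε for all x ∈ ℝ. -/
open scoped FourierTransform
open MeasureTheory

namespace ApproxNFAux

open Real Set MeasureTheory Complex

noncomputable section


/-- the normalizing function `(1+x²)^(-1/2)` -/
def nf (x : ℝ) : ℝ := (1 + x ^ 2) ^ (-(1 / 2 : ℝ))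

/-- `g(x) = x (1+x²)^(-1/2)` -/
def gf (x : ℝ) : ℝ := x * nf x

lemma one_add_sq_pos (x : ℝ) : 0 < 1 + x ^ 2 := by positivity

lemma nf_nonneg (x : ℝ) : 0 ≤ nf x := Real.rpow_nonneg (one_add_sq_pos x).le _

lemma nf_le_one (x : ℝ) : nf x ≤ 1 :=
  Real.rpow_le_one_of_one_le_of_nonpos (by nlinarith [sq_nonneg x]) (by norm_num)

lemma nf_cont : Continuous nf :=
  (continuous_const.add (continuous_pow 2)).rpow_const fun x => Or.inl (one_add_sq_pos x).ne'

lemma hasDerivAt_nf (x : ℝ) :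
    HasDerivAt nf (-(1 / 2 : ℝ) * (1 + x ^ 2) ^ (-(1 / 2 : ℝ) - 1) * (2 * x)) x := by
  have h1 : HasDerivAt (fun y : ℝ => 1 + y ^ 2) (2 * x) x := by
    simpa using (hasDerivAt_pow 2 x).const_add 1
  have h2 : HasDerivAt (fun y : ℝ => y ^ (-(1 / 2 : ℝ)))
      (-(1 / 2 : ℝ) * (1 + x ^ 2) ^ (-(1 / 2 : ℝ) - 1)) (1 + x ^ 2) :=
    Real.hasDerivAt_rpow_const (Or.inl (one_add_sq_pos x).ne')
  exact h2.comp x h1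

lemma hasDerivAt_gf (x : ℝ) : HasDerivAt gf ((1 + x ^ 2) ^ (-(3 / 2) : ℝ)) x := by
  have h := (hasDerivAt_id x).mul (hasDerivAt_nf x)
  have hnf : nf x = (1 + x ^ 2) * (1 + x ^ 2) ^ (-(3 / 2) : ℝ) := by
    rw [nf, show (-(1 / 2) : ℝ) = 1 + (-(3 / 2) : ℝ) by norm_num,
      Real.rpow_add (one_add_sq_pos x), Real.rpow_one]
  have hexp : (1 + x ^ 2) ^ (-(1 / 2 : ℝ) - 1) = (1 + x ^ 2) ^ (-(3 / 2) : ℝ) := by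
    norm_num
  refine h.congr_deriv ?_
  simp only [id] at *
  rw [hnf, hexp]
  ring

lemma gf_lipschitz (a b : ℝ) : |gf a - gf b| ≤ |a - b| := by
  have := Convex.norm_image_sub_le_of_norm_hasDerivWithin_le
    (f := gf) (f' := fun x => (1 + x ^ 2) ^ (-(3 / 2) : ℝ)) (C := 1) (s := Set.univ)
    (fun x _ => (hasDerivAt_gf x).hasDerivWithinAt) (fun x _ => ?_) convex_univ
    (Set.mem_univ b) (Set.mem_univ a)
  · simpa [Real.norm_eq_abs] using this
  · rw [Real.norm_eq_abs, _root_.abs_of_nonneg (Real.rpow_nonneg (one_add_sq_pos x).le _)]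
    exact Real.rpow_le_one_of_one_le_of_nonpos (by nlinarith [sq_nonneg x]) (by norm_num)



/-- the subordination kernel whose `t`-integral is the Fourier transform of `nf` -/
def Kf (ξ t : ℝ) : ℝ := t⁻¹ * Real.exp (-(t + π ^ 2 * ξ ^ 2 / t))

/-- the measure `volume ⊗ (volume on (0,∞))` -/
def μK : Measure (ℝ × ℝ) := (volume : Measure ℝ).prod ((volume : Measure ℝ).restrict (Ioi 0))

/-- the (real) Fourier transform of `nf`, i.e. `2 K₀(2π|ξ|)`, given by subordination -/
def phi (ξ : ℝ) : ℝ := ∫ t in Ioi (0 : ℝ), Kf ξ t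

lemma Kf_nonneg {ξ t : ℝ} (ht : 0 < t) : 0 ≤ Kf ξ t :=
  mul_nonneg (inv_nonneg.2 ht.le) (Real.exp_pos _).le

lemma Kf_eq (ξ : ℝ) {t : ℝ} (ht : 0 < t) :
    Kf ξ t = t⁻¹ * Real.exp (-t) * Real.exp (-(π ^ 2 / t) * ξ ^ 2) := by
  rw [Kf, show -(t + π ^ 2 * ξ ^ 2 / t) = -t + -(π ^ 2 / t) * ξ ^ 2 by field_simp; ring,
    Real.exp_add]
  ring

lemma Kf_aesm : AEStronglyMeasurable (fun p : ℝ × ℝ => Kf p.1 p.2) μK := by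
  apply Measurable.aestronglyMeasurable
  unfold Kf
  fun_prop

lemma Kf_section_integrable {t : ℝ} (ht : 0 < t) : Integrable (fun ξ => Kf ξ t) := by
  have h : (fun ξ => Kf ξ t) =
      fun ξ => t⁻¹ * Real.exp (-t) * Real.exp (-(π ^ 2 / t) * ξ ^ 2) := by
    funext ξ; exact Kf_eq ξ ht
  rw [h]
  exact (integrable_exp_neg_mul_sq (by positivity)).const_mul _

lemma Kf_section_integral {t : ℝ} (ht : 0 < t) :
    ∫ ξ : ℝ, ‖Kf ξ t‖ = t⁻¹ * Real.exp (-t) * Real.sqrt (t / π) := by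
  have h : (fun ξ : ℝ => ‖Kf ξ t‖) =
      fun ξ => t⁻¹ * Real.exp (-t) * Real.exp (-(π ^ 2 / t) * ξ ^ 2) := by
    funext ξ
    rw [Real.norm_eq_abs, _root_.abs_of_nonneg (Kf_nonneg ht), Kf_eq ξ ht]
  rw [h, MeasureTheory.integral_const_mul, integral_gaussian]
  have : π / (π ^ 2 / t) = t / π := by
    field_simp
  rw [this]

lemma Kf_integrable : Integrable (fun p : ℝ × ℝ => Kf p.1 p.2) μK := by
  rw [μK, MeasureTheory.integrable_prod_iff' Kf_aesm]
  constructor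
  · filter_upwards [ae_restrict_mem measurableSet_Ioi] with t ht
    exact Kf_section_integrable ht
  · have hbase : IntegrableOn
        (fun t : ℝ => Real.sqrt π⁻¹ * (Real.exp (-t) * t ^ ((1 / 2 : ℝ) - 1))) (Ioi 0) :=
      (Real.GammaIntegral_convergent (by norm_num : (0 : ℝ) < 1 / 2)).const_mul _
    apply hbase.congr_fun_ae
    filter_upwards [ae_restrict_mem measurableSet_Ioi] with t ht
    rw [Kf_section_integral ht]
    have ht0 : (0 : ℝ) < t := ht
    have hsq : Real.sqrt t * Real.sqrt t = t := Real.mul_self_sqrt ht0.le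
    have h1 : t ^ ((1 / 2 : ℝ) - 1) = (Real.sqrt t)⁻¹ := by
      rw [show ((1 / 2 : ℝ) - 1) = -(1 / 2 : ℝ) by norm_num, Real.rpow_neg ht0.le,
        ← Real.sqrt_eq_rpow]
    have h2 : Real.sqrt (t / π) = Real.sqrt t * Real.sqrt π⁻¹ := by
      rw [div_eq_mul_inv, Real.sqrt_mul ht0.le]
    have hst : Real.sqrt t ≠ 0 := (Real.sqrt_pos.mpr ht0).ne'
    rw [h1, h2]
    have ht' : t⁻¹ = (Real.sqrt t)⁻¹ * (Real.sqrt t)⁻¹ := by rw [← mul_inv, hsq]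
    rw [ht']
    field_simp


lemma inner_gauss (x : ℝ) {t : ℝ} (ht : 0 < t) :
    ∫ ξ : ℝ, Complex.exp ((2 * π * ξ * x : ℝ) * Complex.I) * (Kf ξ t : ℂ)
      = ((t⁻¹ * Real.exp (-t) * (t / π) ^ (1 / 2 : ℝ) * Real.exp (-(t * x ^ 2)) : ℝ) : ℂ) := by
  have hbC : (0 : ℝ) < ((((π ^ 2 / t : ℝ)) : ℂ)).re := by
    rw [Complex.ofReal_re]
    positivity
  have hrw : ∀ ξ : ℝ, Complex.exp ((2 * π * ξ * x : ℝ) * Complex.I) * (Kf ξ t : ℂ)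
      = ((t⁻¹ * Real.exp (-t) : ℝ) : ℂ) *
        (Complex.exp (Complex.I * ((2 * π * x : ℝ) : ℂ) * (ξ : ℂ)) *
         Complex.exp (-(((π ^ 2 / t : ℝ)) : ℂ) * (ξ : ℂ) ^ 2)) := by
    intro ξ
    rw [Kf_eq ξ ht]
    rw [show ((t⁻¹ * Real.exp (-t) * Real.exp (-(π ^ 2 / t) * ξ ^ 2) : ℝ) : ℂ)
        = ((t⁻¹ * Real.exp (-t) : ℝ) : ℂ) *
          Complex.exp (((-(π ^ 2 / t) * ξ ^ 2 : ℝ)) : ℂ) by push_cast; ring]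
    rw [show (((-(π ^ 2 / t) * ξ ^ 2 : ℝ)) : ℂ) = -(((π ^ 2 / t : ℝ)) : ℂ) * (ξ : ℂ) ^ 2 by
      push_cast; ring]
    rw [show ((2 * π * ξ * x : ℝ) : ℂ) * Complex.I
        = Complex.I * ((2 * π * x : ℝ) : ℂ) * (ξ : ℂ) by push_cast; ring]
    ring
  simp_rw [hrw]
  rw [MeasureTheory.integral_const_mul]
  rw [fourierIntegral_gaussian hbC ((2 * π * x : ℝ) : ℂ)]
  have e3 : ((π : ℂ)) / (((π ^ 2 / t : ℝ)) : ℂ) = (((t / π : ℝ)) : ℂ) := by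
    have hπ : (π : ℂ) ≠ 0 := Complex.ofReal_ne_zero.mpr Real.pi_ne_zero
    have htC : (t : ℂ) ≠ 0 := Complex.ofReal_ne_zero.mpr ht.ne'
    push_cast
    field_simp
  have e4 : (((t / π : ℝ)) : ℂ) ^ (1 / 2 : ℂ) = (((t / π) ^ (1 / 2 : ℝ) : ℝ) : ℂ) := by
    rw [Complex.ofReal_cpow (by positivity : (0:ℝ) ≤ t / π)]
    norm_num
  have e5 : -(((2 * π * x : ℝ) : ℂ)) ^ 2 / (4 * (((π ^ 2 / t : ℝ)) : ℂ))
      = ((-(t * x ^ 2) : ℝ) : ℂ) := by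
    have hπ : (π : ℂ) ≠ 0 := Complex.ofReal_ne_zero.mpr Real.pi_ne_zero
    have htC : (t : ℂ) ≠ 0 := Complex.ofReal_ne_zero.mpr ht.ne'
    push_cast
    field_simp
    ring
  rw [e3, e4, e5]
  push_cast
  ring

lemma real_outer (x : ℝ) :
    (∫ t in Ioi (0 : ℝ),
      t⁻¹ * Real.exp (-t) * (t / π) ^ (1 / 2 : ℝ) * Real.exp (-(t * x ^ 2))) = nf x := by
  have h1 : EqOn (fun t : ℝ => t⁻¹ * Real.exp (-t) * (t / π) ^ (1 / 2 : ℝ) *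
        Real.exp (-(t * x ^ 2)))
      (fun t : ℝ => π ^ (-(1 / 2) : ℝ) * (t ^ ((1 / 2 : ℝ) - 1) * Real.exp (-((1 + x ^ 2) * t))))
      (Ioi 0) := by
    intro t ht
    have ht0 : (0 : ℝ) < t := ht
    simp only
    rw [Real.div_rpow ht0.le Real.pi_pos.le]
    have h2 : t⁻¹ * t ^ ((1 : ℝ) / 2) = t ^ ((1 / 2 : ℝ) - 1) := by
      rw [show ((1 / 2 : ℝ) - 1) = -1 + (1/2 : ℝ) by norm_num, Real.rpow_add ht0]
      rw [Real.rpow_neg_one]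
    have h3 : Real.exp (-((1 + x ^ 2) * t)) = Real.exp (-t) * Real.exp (-(t * x ^ 2)) := by
      rw [← Real.exp_add]; congr 1; ring
    have h4 : π ^ (-(1 / 2) : ℝ) = (π ^ ((1:ℝ) / 2))⁻¹ := by
      rw [← Real.rpow_neg Real.pi_pos.le]
    rw [h3, h4, ← h2]
    have h5 : π ^ ((1:ℝ)/2) ≠ 0 := by positivity
    field_simp
  rw [setIntegral_congr_fun measurableSet_Ioi h1, MeasureTheory.integral_const_mul,
    integral_rpow_mul_exp_neg_mul_Ioi (by norm_num : (0:ℝ) < 1/2) (one_add_sq_pos x),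
    Real.Gamma_one_half_eq, show (1 / (1 + x ^ 2) : ℝ) = (1 + x ^ 2)⁻¹ from one_div _,
    Real.inv_rpow (one_add_sq_pos x).le,
    ← Real.rpow_neg (one_add_sq_pos x).le, Real.sqrt_eq_rpow, nf]
  have hππ : π ^ (-(1/2) : ℝ) * π ^ ((1/2) : ℝ) = 1 := by
    rw [← Real.rpow_add Real.pi_pos]; norm_num
  linear_combination (1 + x ^ 2 : ℝ) ^ (-(1/2) : ℝ) * hππ


lemma phi_integrable : Integrable phi :=
  MeasureTheory.Integrable.integral_prod_left Kf_integrable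

lemma phi_nonneg (ξ : ℝ) : 0 ≤ phi ξ :=
  setIntegral_nonneg measurableSet_Ioi fun _ ht => Kf_nonneg ht

lemma phi_aesm : AEStronglyMeasurable phi volume :=
  MeasureTheory.AEStronglyMeasurable.integral_prod_right' Kf_aesm

lemma key (x : ℝ) :
    ∫ ξ : ℝ, Complex.exp ((2 * π * ξ * x : ℝ) * Complex.I) * (phi ξ : ℂ) = (nf x : ℂ) := by
  have hUm : AEStronglyMeasurable (Function.uncurry fun ξ t : ℝ =>
      Complex.exp ((2 * π * ξ * x : ℝ) * Complex.I) * (Kf ξ t : ℂ)) μK := by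
    apply AEStronglyMeasurable.mul
    · apply Continuous.aestronglyMeasurable
      apply Complex.continuous_exp.comp
      apply Continuous.mul _ continuous_const
      exact Complex.continuous_ofReal.comp (by fun_prop)
    · exact Complex.continuous_ofReal.comp_aestronglyMeasurable Kf_aesm
  have hU : Integrable (Function.uncurry fun ξ t : ℝ =>
      Complex.exp ((2 * π * ξ * x : ℝ) * Complex.I) * (Kf ξ t : ℂ)) μK := by
    apply Kf_integrable.norm.mono' hUm
    refine Filter.Eventually.of_forall fun p => ?_
    show ‖Complex.exp ((2 * π * p.1 * x : ℝ) * Complex.I) * ((Kf p.1 p.2 : ℝ) : ℂ)‖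
        ≤ ‖Kf p.1 p.2‖
    rw [norm_mul, Complex.norm_exp_ofReal_mul_I,
      Complex.norm_real, one_mul, Real.norm_eq_abs]
  calc ∫ ξ : ℝ, Complex.exp ((2 * π * ξ * x : ℝ) * Complex.I) * (phi ξ : ℂ)
      = ∫ ξ : ℝ, ∫ t in Ioi (0:ℝ),
          Complex.exp ((2 * π * ξ * x : ℝ) * Complex.I) * (Kf ξ t : ℂ) := by
        congr 1
        funext ξ
        rw [show ((phi ξ : ℝ) : ℂ) = ∫ t in Ioi (0:ℝ), ((Kf ξ t : ℝ) : ℂ) from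
          integral_ofReal.symm]
        rw [MeasureTheory.integral_const_mul]
  _ = ∫ t in Ioi (0:ℝ), ∫ ξ : ℝ,
          Complex.exp ((2 * π * ξ * x : ℝ) * Complex.I) * (Kf ξ t : ℂ) :=
        MeasureTheory.integral_integral_swap hU
  _ = ∫ t in Ioi (0:ℝ),
        ((t⁻¹ * Real.exp (-t) * (t / π) ^ (1 / 2 : ℝ) * Real.exp (-(t * x ^ 2)) : ℝ) : ℂ) := by
        apply setIntegral_congr_fun measurableSet_Ioi
        intro t ht
        exact inner_gauss x ht
  _ = (nf x : ℂ) := by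
        rw [show (nf x : ℂ) = ((∫ t in Ioi (0:ℝ), t⁻¹ * Real.exp (-t) * (t / π) ^ (1 / 2 : ℝ) *
            Real.exp (-(t * x ^ 2)) : ℝ) : ℂ) by rw [real_outer x]]
        exact integral_ofReal


/-- a fixed smooth bump function: `1` on `[-1,1]`, supported in `(-2,2)` -/
def bmp : ContDiffBump (0 : ℝ) := ⟨1, 2, one_pos, one_lt_two⟩

/-- the bump as a complex-valued function -/
def psi : ℝ → ℂ := fun ξ => (bmp ξ : ℂ)

lemma psi_contDiff : ContDiff ℝ ((⊤ : ℕ∞) : WithTop ℕ∞) psi :=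
  Complex.ofRealCLM.contDiff.comp bmp.contDiff

lemma psi_cont : Continuous psi := psi_contDiff.continuous

lemma psi_hcs : HasCompactSupport psi :=
  bmp.hasCompactSupport.comp_left (g := fun r : ℝ => (r : ℂ)) rfl

lemma psi_int : Integrable psi := psi_cont.integrable_of_hasCompactSupport psi_hcs

lemma psi_zero : psi 0 = 1 := by
  rw [psi, bmp.one_of_mem_closedBall (Metric.mem_closedBall_self zero_le_one)]
  norm_num

lemma psi_norm_le_one (ξ : ℝ) : ‖psi ξ‖ ≤ 1 := by
  rw [psi, Complex.norm_real, Real.norm_eq_abs,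
    _root_.abs_of_nonneg bmp.nonneg]
  exact bmp.le_one

lemma psi_eq_zero {ξ : ℝ} (hξ : 2 ≤ |ξ|) : psi ξ = 0 := by
  rw [psi]
  norm_cast
  rw [← Function.notMem_support, bmp.support_eq]
  intro hmem
  rw [Metric.mem_ball, dist_zero_right, Real.norm_eq_abs] at hmem
  · exact absurd hmem (not_lt.mpr hξ)

lemma psi_iter_hcs : ∀ n : ℕ, HasCompactSupport (iteratedDeriv n psi) := by
  intro n
  induction n with
  | zero => simpa [iteratedDeriv_zero] using psi_hcs
  | succ k ih =>
    rw [iteratedDeriv_succ]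
    exact ih.deriv

lemma psi_iter_int (n : ℕ) (_ : (n : ℕ∞) ≤ (⊤ : ℕ∞)) : Integrable (iteratedDeriv n psi) :=
  (psi_contDiff.continuous_iteratedDeriv n (by exact_mod_cast le_top)).integrable_of_hasCompactSupport
    (psi_iter_hcs n)

/-- the Fourier transform of the bump -/
def Wf : ℝ → ℂ := 𝓕 psi

lemma Wf_cont : Continuous Wf :=
  VectorFourier.fourierIntegral_continuous Real.continuous_fourierChar
    (innerSL ℝ).continuous₂ psi_int

lemma Wf_bound : ∃ C : ℝ, 0 ≤ C ∧ ∀ y : ℝ, (1 + |y|) * (1 + y ^ 2) * ‖Wf y‖ ≤ C := by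
  set K0 : ℝ := ∫ v : ℝ, ‖psi v‖ with hK0def
  set K3 : ℝ := ∫ v : ℝ, ‖iteratedDeriv 3 psi v‖ with hK3def
  have hK0 : 0 ≤ K0 := integral_nonneg fun v => norm_nonneg _
  have hK3 : 0 ≤ K3 := integral_nonneg fun v => norm_nonneg _
  refine ⟨4 * K0 + 4 * K3, by positivity, fun y => ?_⟩
  have h0 : ‖Wf y‖ ≤ K0 :=
    VectorFourier.norm_fourierIntegral_le_integral_norm Real.fourierChar volume (innerₗ ℝ) psi y
  have hWnn : 0 ≤ ‖Wf y‖ := norm_nonneg _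
  by_cases hy : |y| ≤ 1
  · have h1 : (1 + |y|) * (1 + y ^ 2) ≤ 4 := by nlinarith [abs_nonneg y, _root_.sq_abs y]
    nlinarith
  · push_neg at hy
    have h3 := congrFun (Real.fourier_iteratedDeriv (N := (⊤ : ℕ∞)) (n := 3)
      psi_contDiff psi_iter_int le_top) y
    have hb : ‖(𝓕 (iteratedDeriv 3 psi) : ℝ → ℂ) y‖ ≤ K3 :=
      VectorFourier.norm_fourierIntegral_le_integral_norm Real.fourierChar volume (innerₗ ℝ)
        (iteratedDeriv 3 psi) y
    rw [h3] at hb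
    rw [show (𝓕 psi : ℝ → ℂ) = Wf from rfl] at hb
    have hnorm : ‖(2 * ↑π * Complex.I * (y : ℂ)) ^ 3 • Wf y‖
        = (2 * π * |y|) ^ 3 * ‖Wf y‖ := by
      rw [norm_smul, norm_pow]
      congr 2
      simp [map_mul, Complex.norm_real, Complex.norm_I,
        _root_.abs_of_nonneg Real.pi_pos.le]
      all_goals ring
    rw [hnorm] at hb
    have hπ1 : (1 : ℝ) ≤ 2 * π := by nlinarith [Real.pi_gt_three]
    have hyc : |y| ^ 3 * ‖Wf y‖ ≤ (2 * π * |y|) ^ 3 * ‖Wf y‖ := by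
      apply mul_le_mul_of_nonneg_right _ hWnn
      have h2π3 : (1 : ℝ) ≤ (2 * π) ^ 3 := by simpa using pow_le_pow_left₀ one_pos.le hπ1 3
      have : |y| ^ 3 ≤ (2 * π) ^ 3 * |y| ^ 3 := by
        nlinarith [pow_nonneg (abs_nonneg y) 3, h2π3]
      calc |y| ^ 3 ≤ (2 * π) ^ 3 * |y| ^ 3 := this
      _ = (2 * π * |y|) ^ 3 := by ring
    have hy3 : |y| ^ 3 * ‖Wf y‖ ≤ K3 := hyc.trans hb
    have hfac : (1 + |y|) * (1 + y ^ 2) ≤ 4 * |y| ^ 3 := by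
      have h2 : y ^ 2 = |y| ^ 2 := (_root_.sq_abs y).symm
      nlinarith [abs_nonneg y]
    nlinarith

/-- the inverse Fourier transform of the bump -/
def Jf : ℝ → ℂ := fun y => Wf (-y)

lemma Jf_eq_fourierInv : (𝓕⁻ psi : ℝ → ℂ) = Jf := by
  funext y
  exact Real.fourierInv_eq_fourier_neg psi y

lemma Jf_cont : Continuous Jf := Wf_cont.comp continuous_neg

lemma Jf_bound : ∃ C : ℝ, 0 ≤ C ∧ ∀ y : ℝ, (1 + |y|) * (1 + y ^ 2) * ‖Jf y‖ ≤ C := by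
  obtain ⟨C, hC0, hC⟩ := Wf_bound
  refine ⟨C, hC0, fun y => ?_⟩
  have := hC (-y)
  simpa [Jf, abs_neg] using this

lemma Jf_int : Integrable Jf := by
  obtain ⟨C, hC0, hC⟩ := Jf_bound
  apply (integrable_inv_one_add_sq.const_mul C).mono' Jf_cont.aestronglyMeasurable
  refine Filter.Eventually.of_forall fun y => ?_
  have h1 : (0:ℝ) < 1 + y ^ 2 := one_add_sq_pos y
  rw [← div_eq_mul_inv, le_div_iff₀ h1]
  nlinarith [hC y, norm_nonneg (Jf y), abs_nonneg y,
    mul_nonneg (mul_nonneg (abs_nonneg y) h1.le) (norm_nonneg (Jf y))]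

lemma Jf_mom_int : Integrable (fun y : ℝ => |y| * ‖Jf y‖) := by
  obtain ⟨C, hC0, hC⟩ := Jf_bound
  apply (integrable_inv_one_add_sq.const_mul C).mono'
    ((continuous_abs.mul Jf_cont.norm).aestronglyMeasurable)
  refine Filter.Eventually.of_forall fun y => ?_
  have h1 : (0:ℝ) < 1 + y ^ 2 := one_add_sq_pos y
  have hnn : (0:ℝ) ≤ |y| * ‖Jf y‖ := mul_nonneg (abs_nonneg y) (norm_nonneg _)
  rw [Real.norm_eq_abs, Pi.mul_apply,
    _root_.abs_of_nonneg hnn, ← div_eq_mul_inv, le_div_iff₀ h1]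
  nlinarith [hC y, norm_nonneg (Jf y), abs_nonneg y,
    mul_nonneg h1.le (norm_nonneg (Jf y))]

lemma Wf_int : Integrable Wf := by
  obtain ⟨C, hC0, hC⟩ := Wf_bound
  apply (integrable_inv_one_add_sq.const_mul C).mono' Wf_cont.aestronglyMeasurable
  refine Filter.Eventually.of_forall fun y => ?_
  have h1 : (0:ℝ) < 1 + y ^ 2 := one_add_sq_pos y
  rw [← div_eq_mul_inv, le_div_iff₀ h1]
  nlinarith [hC y, norm_nonneg (Wf y), abs_nonneg y,
    mul_nonneg (mul_nonneg (abs_nonneg y) h1.le) (norm_nonneg (Wf y))]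

lemma fourier_Jf : (𝓕 Jf : ℝ → ℂ) = psi := by
  rw [← Jf_eq_fourierInv]
  exact psi_cont.fourier_fourierInv_eq psi_int Wf_int

lemma Jf_integral : ∫ y : ℝ, Jf y = 1 := by
  have h0 : (𝓕 Jf : ℝ → ℂ) 0 = ∫ y : ℝ, Jf y := by
    rw [Real.fourier_eq]
    simp
  rw [← h0, fourier_Jf, psi_zero]

/-- the rescaled kernel `T · J(T y)` -/
def JT (T : ℝ) : ℝ → ℂ := fun y => (T : ℂ) * Jf (T * y)

lemma JT_cont (T : ℝ) : Continuous (JT T) :=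
  continuous_const.mul (Jf_cont.comp (continuous_const.mul continuous_id))

lemma JT_int {T : ℝ} (hT : 0 < T) : Integrable (JT T) := by
  have h := (Jf_int.comp_mul_left' hT.ne').const_mul (T : ℂ)
  exact h

lemma JT_smul (T : ℝ) (y : ℝ) : JT T y = (T : ℝ) • Jf (T * y) := by
  rw [JT, Complex.real_smul]

lemma JT_integral {T : ℝ} (hT : 0 < T) : ∫ y : ℝ, JT T y = 1 := by
  simp_rw [JT_smul]
  rw [MeasureTheory.integral_smul, MeasureTheory.Measure.integral_comp_mul_left Jf T,
    smul_smul, show T * |T⁻¹| = 1 by rw [abs_of_pos (inv_pos.mpr hT)]; field_simp,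
    one_smul, Jf_integral]

lemma JT_mom_eq {T : ℝ} (hT : 0 < T) (y : ℝ) :
    |y| * ‖JT T y‖ = (fun u : ℝ => |u| * ‖Jf u‖) (T * y) := by
  simp only [JT, norm_mul, Complex.norm_real, Real.norm_eq_abs, abs_mul,
    _root_.abs_of_pos hT]
  ring

lemma JT_mom_int {T : ℝ} (hT : 0 < T) : Integrable (fun y : ℝ => |y| * ‖JT T y‖) := by
  rw [show (fun y : ℝ => |y| * ‖JT T y‖)
      = fun y : ℝ => (fun u : ℝ => |u| * ‖Jf u‖) (T * y) from funext (JT_mom_eq hT)]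
  exact Jf_mom_int.comp_mul_left' hT.ne'

lemma JT_mom_integral {T : ℝ} (hT : 0 < T) :
    (∫ y : ℝ, |y| * ‖JT T y‖) = T⁻¹ * ∫ u : ℝ, |u| * ‖Jf u‖ := by
  rw [show (fun y : ℝ => |y| * ‖JT T y‖)
      = fun y : ℝ => (fun u : ℝ => |u| * ‖Jf u‖) (T * y) from funext (JT_mom_eq hT)]
  rw [MeasureTheory.Measure.integral_comp_mul_left (fun u : ℝ => |u| * ‖Jf u‖) T,
    abs_of_pos (inv_pos.mpr hT), smul_eq_mul]

lemma rep {T : ℝ} (hT : 0 < T) (ξ : ℝ) :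
    psi (ξ / T) = ∫ y : ℝ, Complex.exp ((-2 * π * y * ξ : ℝ) * Complex.I) * JT T y := by
  have hG : ∀ y : ℝ, Complex.exp ((-2 * π * y * ξ : ℝ) * Complex.I) * JT T y
      = (T : ℝ) • ((fun u : ℝ =>
          Complex.exp ((-2 * π * u * (ξ / T) : ℝ) * Complex.I) * Jf u) (T * y)) := by
    intro y
    simp only [JT]
    rw [show (-2 * π * (T * y) * (ξ / T) : ℝ) = (-2 * π * y * ξ : ℝ) by field_simp]
    rw [Complex.real_smul]
    ring
  rw [show (fun y : ℝ => Complex.exp ((-2 * π * y * ξ : ℝ) * Complex.I) * JT T y)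
      = fun y : ℝ => (T : ℝ) • ((fun u : ℝ =>
          Complex.exp ((-2 * π * u * (ξ / T) : ℝ) * Complex.I) * Jf u) (T * y))
      from funext hG]
  rw [MeasureTheory.integral_smul, MeasureTheory.Measure.integral_comp_mul_left
      (fun u : ℝ => Complex.exp ((-2 * π * u * (ξ / T) : ℝ) * Complex.I) * Jf u) T,
    smul_smul, show T * |T⁻¹| = 1 by rw [abs_of_pos (inv_pos.mpr hT)]; field_simp,
    one_smul]
  rw [← fourier_Jf, Real.fourier_real_eq_integral_exp_smul]
  simp_rw [smul_eq_mul]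

lemma main_rep {T : ℝ} (hT : 0 < T) (x : ℝ) :
    𝓕⁻ (fun ξ : ℝ => (phi ξ : ℂ) * psi (ξ / T)) x = ∫ y : ℝ, JT T y * (nf (x - y) : ℂ) := by
  have h0 : 𝓕⁻ (fun ξ : ℝ => (phi ξ : ℂ) * psi (ξ / T)) x
      = ∫ ξ : ℝ, Complex.exp ((2 * π * ξ * x : ℝ) * Complex.I) * ((phi ξ : ℂ) * psi (ξ / T)) := by
    rw [Real.fourierInv_eq_fourier_neg,
      Real.fourier_real_eq_integral_exp_smul]
    simp_rw [show ∀ ξ : ℝ, (-2 * π * ξ * -x : ℝ) = (2 * π * ξ * x : ℝ) from fun ξ => by ring,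
      smul_eq_mul]
  have h1 : ∀ ξ : ℝ, Complex.exp ((2 * π * ξ * x : ℝ) * Complex.I) * ((phi ξ : ℂ) * psi (ξ / T))
      = ∫ y : ℝ, Complex.exp ((2 * π * ξ * x : ℝ) * Complex.I) * (phi ξ : ℂ) *
          (Complex.exp ((-2 * π * y * ξ : ℝ) * Complex.I) * JT T y) := by
    intro ξ
    rw [rep hT ξ, ← mul_assoc, ← MeasureTheory.integral_const_mul]
  have hF : Integrable (Function.uncurry fun ξ y : ℝ =>
      Complex.exp ((2 * π * ξ * x : ℝ) * Complex.I) * (phi ξ : ℂ) *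
        (Complex.exp ((-2 * π * y * ξ : ℝ) * Complex.I) * JT T y))
      ((volume : Measure ℝ).prod (volume : Measure ℝ)) := by
    have hbase : Integrable (fun p : ℝ × ℝ => phi p.1 * ‖JT T p.2‖)
        ((volume : Measure ℝ).prod (volume : Measure ℝ)) :=
      phi_integrable.mul_prod (JT_int hT).norm
    apply hbase.mono'
    · apply AEStronglyMeasurable.mul
      · apply AEStronglyMeasurable.mul
        · apply Continuous.aestronglyMeasurable
          apply Complex.continuous_exp.comp
          apply Continuous.mul _ continuous_const
          exact Complex.continuous_ofReal.comp (by fun_prop)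
        · exact (Complex.continuous_ofReal.comp_aestronglyMeasurable phi_aesm).comp_fst
      · apply Continuous.aestronglyMeasurable
        apply Continuous.mul
        · apply Complex.continuous_exp.comp
          apply Continuous.mul _ continuous_const
          exact Complex.continuous_ofReal.comp (by fun_prop)
        · exact (JT_cont T).comp continuous_snd
    · refine Filter.Eventually.of_forall fun p => ?_
      show ‖Complex.exp ((2 * π * p.1 * x : ℝ) * Complex.I) * (phi p.1 : ℂ) *
          (Complex.exp ((-2 * π * p.2 * p.1 : ℝ) * Complex.I) * JT T p.2)‖
        ≤ phi p.1 * ‖JT T p.2‖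
      rw [norm_mul, norm_mul, norm_mul, Complex.norm_exp_ofReal_mul_I,
        Complex.norm_exp_ofReal_mul_I, one_mul, one_mul,
        Complex.norm_of_nonneg (phi_nonneg p.1)]
  have hcol : ∀ y : ℝ, (∫ ξ : ℝ, Complex.exp ((2 * π * ξ * x : ℝ) * Complex.I) * (phi ξ : ℂ) *
        (Complex.exp ((-2 * π * y * ξ : ℝ) * Complex.I) * JT T y))
      = JT T y * (nf (x - y) : ℂ) := by
    intro y
    have hpt : ∀ ξ : ℝ, Complex.exp ((2 * π * ξ * x : ℝ) * Complex.I) * (phi ξ : ℂ) *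
          (Complex.exp ((-2 * π * y * ξ : ℝ) * Complex.I) * JT T y)
        = JT T y * (Complex.exp ((2 * π * ξ * (x - y) : ℝ) * Complex.I) * (phi ξ : ℂ)) := by
      intro ξ
      have hexp : Complex.exp ((2 * π * ξ * x : ℝ) * Complex.I) *
          Complex.exp ((-2 * π * y * ξ : ℝ) * Complex.I)
          = Complex.exp ((2 * π * ξ * (x - y) : ℝ) * Complex.I) := by
        rw [← Complex.exp_add]
        congr 1
        push_cast
        ring
      rw [← hexp]
      ring
    simp_rw [hpt]
    rw [MeasureTheory.integral_const_mul, key (x - y)]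
  rw [h0]
  simp_rw [h1]
  rw [MeasureTheory.integral_integral_swap hF]
  simp_rw [hcol]
end
end ApproxNFAux

open ApproxNFAux in
/-- Key construction in Lemma 3.6(c) of the paper: for every `ε > 0` there is a
compactly supported integrable function `h : ℝ → ℂ` whose inverse Fourier
transform `u = 𝓕⁻ h` approximates `(1 + x²)^(-1/2)` uniformly after
multiplication by `x`:  `|x| · |u(x) - (1 + x²)^(-1/2)| ≤ ε` for all `x`. -/
theorem approx_normalizing_function_by_band_limited :
    ∀ ε > (0 : ℝ), ∃ h : ℝ → ℂ,
      Integrable h ∧ HasCompactSupport h ∧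
      ∀ x : ℝ,
        |x| * ‖𝓕⁻ h x - (((1 + x ^ 2) ^ (-(1 / 2 : ℝ)) : ℝ) : ℂ)‖ ≤ ε := by
  intro ε hε
  set m₁ : ℝ := ∫ y : ℝ, |y| * ‖Jf y‖ with hm₁
  have hm₁0 : 0 ≤ m₁ :=
    integral_nonneg fun y => mul_nonneg (abs_nonneg _) (norm_nonneg _)
  set T : ℝ := (2 * m₁ + 1) / ε with hTdef
  have hT : 0 < T := div_pos (by linarith) hε
  refine ⟨fun ξ => (phi ξ : ℂ) * psi (ξ / T), ?_, ?_, ?_⟩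
  · apply phi_integrable.mono'
    · exact (Complex.continuous_ofReal.comp_aestronglyMeasurable phi_aesm).mul
        ((psi_cont.comp (continuous_id.div_const T)).aestronglyMeasurable)
    · refine Filter.Eventually.of_forall fun ξ => ?_
      rw [norm_mul]
      calc ‖((phi ξ : ℝ) : ℂ)‖ * ‖psi (ξ / T)‖ ≤ ‖((phi ξ : ℝ) : ℂ)‖ * 1 :=
        mul_le_mul_of_nonneg_left (psi_norm_le_one _) (norm_nonneg _)
      _ = phi ξ := by
        rw [mul_one, Complex.norm_of_nonneg (phi_nonneg ξ)]
  · apply HasCompactSupport.intro (K := Set.Icc (-(2 * T)) (2 * T)) isCompact_Icc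
    intro ξ hξ
    have h2T : 2 * T ≤ |ξ| := by
      simp only [Set.mem_Icc, not_and_or, not_le] at hξ
      rcases hξ with h | h
      · exact le_abs.mpr (Or.inr (by linarith))
      · exact le_abs.mpr (Or.inl h.le)
    have h2 : 2 ≤ |ξ / T| := by
      rw [abs_div, _root_.abs_of_pos hT, le_div_iff₀ hT]
      linarith
    rw [psi_eq_zero h2, mul_zero]
  · intro x
    have hrep := main_rep hT x
    set d : ℝ → ℝ := fun y => x * nf (x - y) - gf x with hd
    have hdle : ∀ y : ℝ, |d y| ≤ 2 * |y| := by
      intro y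
      have h1 : d y = (gf (x - y) - gf x) + y * nf (x - y) := by
        rw [hd]
        simp only [gf]
        ring
      rw [h1]
      calc |(gf (x - y) - gf x) + y * nf (x - y)|
          ≤ |gf (x - y) - gf x| + |y * nf (x - y)| := abs_add_le _ _
        _ ≤ |x - y - x| + |y| * 1 := by
            apply add_le_add (gf_lipschitz _ _)
            rw [abs_mul]
            exact mul_le_mul_of_nonneg_left
              (by rw [_root_.abs_of_nonneg (nf_nonneg _)]; exact nf_le_one _) (abs_nonneg y)
        _ = 2 * |y| := by
            rw [show x - y - x = -y by ring, abs_neg]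
            ring
    have hJT := JT_int hT
    have hint1 : Integrable (fun y : ℝ => JT T y * (nf (x - y) : ℂ)) := by
      apply hJT.norm.mono'
      · exact ((JT_cont T).mul (Complex.continuous_ofReal.comp
          (nf_cont.comp (continuous_const.sub continuous_id)))).aestronglyMeasurable
      · refine Filter.Eventually.of_forall fun y => ?_
        rw [norm_mul]
        calc ‖JT T y‖ * ‖((nf (x - y) : ℝ) : ℂ)‖ ≤ ‖JT T y‖ * 1 := by
              apply mul_le_mul_of_nonneg_left _ (norm_nonneg _)
              rw [Complex.norm_of_nonneg (nf_nonneg _)]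
              exact nf_le_one _
          _ = ‖JT T y‖ := mul_one _
    have heq : (x : ℂ) * 𝓕⁻ (fun ξ : ℝ => (phi ξ : ℂ) * psi (ξ / T)) x - ((gf x : ℝ) : ℂ)
        = ∫ y : ℝ, JT T y * ((d y : ℝ) : ℂ) := by
      rw [hrep, ← MeasureTheory.integral_const_mul,
        show ((gf x : ℝ) : ℂ) = (∫ y : ℝ, JT T y) * ((gf x : ℝ) : ℂ) by
          rw [JT_integral hT, one_mul],
        ← MeasureTheory.integral_mul_const,
        ← MeasureTheory.integral_sub (hint1.const_mul _) (hJT.mul_const _)]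
      congr 1
      funext y
      rw [hd]
      push_cast
      ring
    have hnorm : ‖∫ y : ℝ, JT T y * ((d y : ℝ) : ℂ)‖ ≤ 2 * (T⁻¹ * m₁) := by
      calc ‖∫ y : ℝ, JT T y * ((d y : ℝ) : ℂ)‖ ≤ ∫ y : ℝ, ‖JT T y * ((d y : ℝ) : ℂ)‖ :=
            norm_integral_le_integral_norm _
        _ ≤ ∫ y : ℝ, 2 * (|y| * ‖JT T y‖) := by
            apply integral_mono_of_nonneg
            · exact Filter.Eventually.of_forall fun y => norm_nonneg _
            · exact (JT_mom_int hT).const_mul 2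
            · refine Filter.Eventually.of_forall fun y => ?_
              show ‖JT T y * ((d y : ℝ) : ℂ)‖ ≤ 2 * (|y| * ‖JT T y‖)
              rw [norm_mul, Complex.norm_real, Real.norm_eq_abs]
              calc ‖JT T y‖ * |d y| ≤ ‖JT T y‖ * (2 * |y|) :=
                    mul_le_mul_of_nonneg_left (hdle y) (norm_nonneg _)
                _ = 2 * (|y| * ‖JT T y‖) := by ring
        _ = 2 * (T⁻¹ * m₁) := by
            rw [MeasureTheory.integral_const_mul, JT_mom_integral hT]
    have hTbound : 2 * (T⁻¹ * m₁) ≤ ε := by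
      have h2m : (0 : ℝ) < 2 * m₁ + 1 := by linarith
      rw [hTdef, inv_div, div_mul_eq_mul_div, ← mul_div_assoc, div_le_iff₀ h2m]
      nlinarith
    show |x| * ‖𝓕⁻ (fun ξ : ℝ => (phi ξ : ℂ) * psi (ξ / T)) x - ((nf x : ℝ) : ℂ)‖ ≤ ε
    have hmul : (x : ℂ) * (𝓕⁻ (fun ξ : ℝ => (phi ξ : ℂ) * psi (ξ / T)) x - ((nf x : ℝ) : ℂ))
        = (x : ℂ) * 𝓕⁻ (fun ξ : ℝ => (phi ξ : ℂ) * psi (ξ / T)) x - ((gf x : ℝ) : ℂ) := by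
      rw [gf]
      push_cast
      ring
    calc |x| * ‖𝓕⁻ (fun ξ : ℝ => (phi ξ : ℂ) * psi (ξ / T)) x - ((nf x : ℝ) : ℂ)‖
        = ‖(x : ℂ) * (𝓕⁻ (fun ξ : ℝ => (phi ξ : ℂ) * psi (ξ / T)) x - ((nf x : ℝ) : ℂ))‖ := by
          rw [norm_mul, Complex.norm_real, Real.norm_eq_abs]
      _ = ‖∫ y : ℝ, JT T y * ((d y : ℝ) : ℂ)‖ := by rw [hmul, heq]
      _ ≤ 2 * (T⁻¹ * m₁) := hnorm
      _ ≤ ε := hTbound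
end
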